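/- Let μ be a probability measure on a measurable space 𝒳, let κ be a Markov kernel from 𝒳 to a measurable space 𝒴, and let ν be a probability measure on 𝒴. For every α > 1, the Rényi divergence between the joint measure μ ⊗ κ on 𝒳 × 𝒴 (with first marginal μ and conditional law κ) and the product measure μ × ν satisfies D_α(μ ⊗ κ ‖ μ × ν) ≤ ess sup_{x ∼ μ} D_α(κ(x) ‖ ν). -/

import Mathlib

open MeasureTheory ProbabilityTheory
open scoped ENNReal

open Classical in
/-- The Rényi divergence of order `a` between two measures:
`D_a(P‖Q) = (1/(a−1)) · log ∫ (dP/dQ)^a dQ` if `P ≪ Q`, and `∞` otherwise. -/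
noncomputable def renyiDiv {Ω : Type*} [MeasurableSpace Ω] (a : ℝ)
    (P Q : Measure Ω) : EReal :=
  if P ≪ Q then (((a - 1)⁻¹ : ℝ) : EReal) * ENNReal.log (∫⁻ x, P.rnDeriv Q x ^ a ∂Q)
  else ⊤

private lemma iSup_min_natCast_aux (d : ℝ≥0∞) : ⨆ n : ℕ, min d (n : ℝ≥0∞) = d := by
  refine le_antisymm (iSup_le fun n => min_le_left _ _) ?_
  rcases eq_or_ne d ⊤ with hd | hd
  · calc d ≤ ⨆ n : ℕ, (n : ℝ≥0∞) := by rw [ENNReal.iSup_natCast]; exact le_top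
    _ ≤ ⨆ n : ℕ, min d (n : ℝ≥0∞) := iSup_mono fun n => by simp [hd]
  · obtain ⟨n, hn⟩ := ENNReal.exists_nat_gt hd
    exact le_iSup_of_le n (by simp [min_eq_left hn.le])

private lemma key_lintegral_le
    {𝓧 𝓨 : Type*} [MeasurableSpace 𝓧] [MeasurableSpace 𝓨]
    (μ : Measure 𝓧) [IsProbabilityMeasure μ]
    (κ : Kernel 𝓧 𝓨) [IsMarkovKernel κ]
    (ν : Measure 𝓨) [IsProbabilityMeasure ν]
    {a : ℝ} (ha : 1 < a) (M : ℝ≥0∞)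
    (h_ac : ∀ᵐ x ∂μ, κ x ≪ ν)
    (h_ac' : μ ⊗ₘ κ ≪ μ.prod ν)
    (hM : ∀ᵐ x ∂μ, ∫⁻ y, ((κ x).rnDeriv ν y) ^ a ∂ν ≤ M) :
    ∫⁻ z, ((μ ⊗ₘ κ).rnDeriv (μ.prod ν) z) ^ a ∂(μ.prod ν) ≤ M := by
  have ha0 : (0:ℝ) < a := lt_trans one_pos ha
  have hc : (0:ℝ) < a - 1 := sub_pos.2 ha
  have hpq : (a / (a - 1)).HolderConjugate a := (Real.HolderConjugate.conjExponent ha).symm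
  set π : Measure (𝓧 × 𝓨) := μ.prod ν with hπ
  set D : 𝓧 × 𝓨 → ℝ≥0∞ := (μ ⊗ₘ κ).rnDeriv π with hDdef
  have hD : Measurable D := Measure.measurable_rnDeriv _ _
  -- key claim for truncations
  have key : ∀ n : ℕ, ∫⁻ z, (min (D z) n) ^ a ∂π ≤ M := by
    intro n
    set g : 𝓧 × 𝓨 → ℝ≥0∞ := fun z => min (D z) n with hgdef
    have hgm : Measurable g := hD.min measurable_const
    have hgma : Measurable fun z => g z ^ a := hgm.pow_const a
    have hgma' : Measurable fun z => g z ^ (a - 1) := hgm.pow_const (a - 1)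
    set T : ℝ≥0∞ := ∫⁻ z, g z ^ a ∂π with hTdef
    have hT_top : T ≠ ⊤ := by
      refine ne_top_of_le_ne_top ?_ (lintegral_mono fun z =>
        ENNReal.rpow_le_rpow (min_le_right _ _) ha0.le)
      rw [lintegral_const, measure_univ, mul_one]
      exact (ENNReal.rpow_lt_top_of_nonneg ha0.le (ENNReal.natCast_ne_top n)).ne
    have hφm : Measurable fun x => ∫⁻ y, g (x, y) ^ a ∂ν :=
      Measurable.lintegral_prod_right' hgma
    have hT_prod : T = ∫⁻ x, ∫⁻ y, g (x, y) ^ a ∂ν ∂μ :=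
      lintegral_prod _ hgma.aemeasurable
    -- step 1 : T ≤ ∫∫ g^(a-1) dκ dμ
    have step1 : T ≤ ∫⁻ x, ∫⁻ y, g (x, y) ^ (a - 1) ∂(κ x) ∂μ := by
      have hle : ∀ z, g z ^ a ≤ g z ^ (a - 1) * D z := by
        intro z
        rcases eq_or_ne (g z) 0 with h0 | h0
        · rw [h0, ENNReal.zero_rpow_of_pos ha0]
          exact zero_le
        · have hne : g z ≠ ⊤ :=
            ((min_le_right _ _).trans_lt (ENNReal.natCast_lt_top n)).ne
          calc g z ^ a = g z ^ (a - 1 + 1) := by ring_nf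
          _ = g z ^ (a - 1) * g z ^ (1:ℝ) := ENNReal.rpow_add _ _ h0 hne
          _ = g z ^ (a - 1) * g z := by rw [ENNReal.rpow_one]
          _ ≤ g z ^ (a - 1) * D z := mul_le_mul_right (min_le_left _ _) _
      calc T ≤ ∫⁻ z, g z ^ (a - 1) * D z ∂π := lintegral_mono hle
      _ = ∫⁻ z, (D * fun z => g z ^ (a - 1)) z ∂π := by
          simp_rw [Pi.mul_apply]; exact lintegral_congr fun z => mul_comm _ _
      _ = ∫⁻ z, g z ^ (a - 1) ∂(π.withDensity D) :=
          (lintegral_withDensity_eq_lintegral_mul π hD hgma').symm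
      _ = ∫⁻ z, g z ^ (a - 1) ∂(μ ⊗ₘ κ) := by
          rw [Measure.withDensity_rnDeriv_eq _ _ h_ac']
      _ = ∫⁻ x, ∫⁻ y, g (x, y) ^ (a - 1) ∂(κ x) ∂μ :=
          Measure.lintegral_compProd hgma'
    -- step 2 : pointwise Hölder in y
    have step2 : ∀ᵐ x ∂μ, ∫⁻ y, g (x, y) ^ (a - 1) ∂(κ x) ≤
        (∫⁻ y, g (x, y) ^ a ∂ν) ^ ((a - 1) / a) * M ^ (1 / a) := by
      filter_upwards [h_ac, hM] with x hx hJx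
      have hmr : Measurable ((κ x).rnDeriv ν) := Measure.measurable_rnDeriv _ _
      have hmg : Measurable fun y => g (x, y) ^ (a - 1) :=
        hgma'.comp (measurable_prodMk_left)
      calc ∫⁻ y, g (x, y) ^ (a - 1) ∂(κ x)
          = ∫⁻ y, g (x, y) ^ (a - 1) ∂(ν.withDensity ((κ x).rnDeriv ν)) := by
            rw [Measure.withDensity_rnDeriv_eq _ _ hx]
        _ = ∫⁻ y, ((κ x).rnDeriv ν * fun y => g (x, y) ^ (a - 1)) y ∂ν :=
            lintegral_withDensity_eq_lintegral_mul ν hmr hmg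
        _ = ∫⁻ y, ((fun y => g (x, y) ^ (a - 1)) * (κ x).rnDeriv ν) y ∂ν := by
            simp_rw [Pi.mul_apply]; exact lintegral_congr fun y => mul_comm _ _
        _ ≤ (∫⁻ y, (g (x, y) ^ (a - 1)) ^ (a / (a - 1)) ∂ν) ^ (1 / (a / (a - 1))) *
              (∫⁻ y, ((κ x).rnDeriv ν y) ^ a ∂ν) ^ (1 / a) :=
            ENNReal.lintegral_mul_le_Lp_mul_Lq ν hpq hmg.aemeasurable hmr.aemeasurable
        _ ≤ (∫⁻ y, g (x, y) ^ a ∂ν) ^ ((a - 1) / a) * M ^ (1 / a) := by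
            have h1 : ∀ y : 𝓨, (g (x, y) ^ (a - 1)) ^ (a / (a - 1)) = g (x, y) ^ a := by
              intro y
              rw [← ENNReal.rpow_mul]
              congr 1
              field_simp
            have h2 : 1 / (a / (a - 1)) = (a - 1) / a := one_div_div _ _
            simp_rw [h1, h2]
            exact mul_le_mul_right (ENNReal.rpow_le_rpow hJx (by positivity)) _
    -- step 3 : T ≤ (∫ φ^((a-1)/a) dμ) * M^(1/a)
    have step3 : T ≤ (∫⁻ x, (∫⁻ y, g (x, y) ^ a ∂ν) ^ ((a - 1) / a) ∂μ) * M ^ (1 / a) := by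
      refine step1.trans ?_
      calc ∫⁻ x, ∫⁻ y, g (x, y) ^ (a - 1) ∂(κ x) ∂μ
          ≤ ∫⁻ x, (∫⁻ y, g (x, y) ^ a ∂ν) ^ ((a - 1) / a) * M ^ (1 / a) ∂μ :=
            lintegral_mono_ae step2
        _ = (∫⁻ x, (∫⁻ y, g (x, y) ^ a ∂ν) ^ ((a - 1) / a) ∂μ) * M ^ (1 / a) :=
            lintegral_mul_const _ (hφm.pow_const _)
    -- step 4 : ∫ φ^((a-1)/a) dμ ≤ T^((a-1)/a)  (Hölder with the constant function 1)
    have step4 : ∫⁻ x, (∫⁻ y, g (x, y) ^ a ∂ν) ^ ((a - 1) / a) ∂μ ≤ T ^ ((a - 1) / a) := by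
      have := ENNReal.lintegral_mul_le_Lp_mul_Lq μ hpq
        (f := fun x => (∫⁻ y, g (x, y) ^ a ∂ν) ^ ((a - 1) / a)) (g := fun _ => 1)
        (hφm.pow_const _).aemeasurable aemeasurable_const
      simp only [Pi.mul_apply, mul_one] at this
      refine this.trans ?_
      have h1 : ∀ x, ((∫⁻ y, g (x, y) ^ a ∂ν) ^ ((a - 1) / a)) ^ (a / (a - 1)) =
          ∫⁻ y, g (x, y) ^ a ∂ν := by
        intro x
        rw [← ENNReal.rpow_mul]
        rw [div_mul_div_comm, mul_comm]
        rw [div_self (by positivity), ENNReal.rpow_one]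
      simp_rw [h1, ENNReal.one_rpow, lintegral_one, measure_univ, ENNReal.one_rpow, mul_one,
        one_div_div]
      rw [← hT_prod]
    have hTle : T ≤ T ^ ((a - 1) / a) * M ^ (1 / a) :=
      step3.trans (mul_le_mul_left step4 _)
    -- conclude T ≤ M
    rcases eq_or_ne T 0 with h0 | h0
    · rw [h0]; exact zero_le
    · have hsplit : T = T ^ ((a - 1) / a) * T ^ (1 / a) := by
        rw [← ENNReal.rpow_add _ _ h0 hT_top]
        rw [← add_div, sub_add_cancel, div_self ha0.ne', ENNReal.rpow_one]
      have hfac0 : T ^ ((a - 1) / a) ≠ 0 := by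
        simp only [ne_eq, ENNReal.rpow_eq_zero_iff, not_or, not_and, not_lt]
        constructor
        · intro h; exact absurd h h0
        · intro h; exact absurd h hT_top
      have hfac_top : T ^ ((a - 1) / a) ≠ ⊤ := by
        simp only [ne_eq, ENNReal.rpow_eq_top_iff, not_or, not_and, not_lt]
        constructor
        · intro h; exact absurd h h0
        · intro h; exact absurd h hT_top
      have hTle2 : T ^ ((a - 1) / a) * T ^ (1 / a) ≤ T ^ ((a - 1) / a) * M ^ (1 / a) :=
        hsplit.symm.trans_le hTle
      have h2 : T ^ (1 / a) ≤ M ^ (1 / a) :=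
        (ENNReal.mul_le_mul_iff_right hfac0 hfac_top).mp hTle2
      calc T = (T ^ (1 / a)) ^ a := by
            rw [← ENNReal.rpow_mul, one_div_mul_cancel ha0.ne', ENNReal.rpow_one]
      _ ≤ (M ^ (1 / a)) ^ a := ENNReal.rpow_le_rpow h2 ha0.le
      _ = M := by rw [← ENNReal.rpow_mul, one_div_mul_cancel ha0.ne', ENNReal.rpow_one]
  -- monotone convergence
  have hmono : Monotone fun (n : ℕ) (z : 𝓧 × 𝓨) => (min (D z) n) ^ a := by
    intro m n hmn
    exact fun z => ENNReal.rpow_le_rpow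
      (min_le_min le_rfl (by exact_mod_cast Nat.cast_le.2 hmn)) ha0.le
  calc ∫⁻ z, D z ^ a ∂π = ∫⁻ z, (⨆ n : ℕ, (min (D z) n) ^ a) ∂π := by
        refine lintegral_congr fun z => ?_
        have : (⨆ n : ℕ, (min (D z) n) ^ a) = (⨆ n : ℕ, min (D z) n) ^ a := by
          have h := OrderIso.map_iSup (ENNReal.orderIsoRpow a ha0) fun n : ℕ => min (D z) n
          simp only [ENNReal.orderIsoRpow_apply] at h
          exact h.symm
        rw [this, iSup_min_natCast_aux]
    _ = ⨆ n : ℕ, ∫⁻ z, (min (D z) n) ^ a ∂π :=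
      lintegral_iSup (fun n => (hD.min measurable_const).pow_const a) hmono
    _ ≤ M := iSup_le key

/-- **Conditional (essential supremum) bound for the Rényi divergence of a joint measure
against a product measure.** For a probability measure `μ` on `𝒳`, a Markov kernel `κ`
from `𝒳` to `𝒴` and a probability measure `ν` on `𝒴`, for every `α > 1`,
`D_α(μ ⊗ κ ‖ μ × ν) ≤ ess sup_{x ∼ μ} D_α(κ(x) ‖ ν)`. -/
theorem renyiDiv_compProd_le_essSup
    {𝓧 𝓨 : Type*} [MeasurableSpace 𝓧] [MeasurableSpace 𝓨]
    (μ : Measure 𝓧) [IsProbabilityMeasure μ]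
    (κ : Kernel 𝓧 𝓨) [IsMarkovKernel κ]
    (ν : Measure 𝓨) [IsProbabilityMeasure ν]
    (a : ℝ) (ha : 1 < a) :
    renyiDiv a (μ ⊗ₘ κ) (μ.prod ν) ≤ essSup (fun x => renyiDiv a (κ x) ν) μ := by
  have hc : (0:ℝ) < a - 1 := sub_pos.2 ha
  set L : EReal := essSup (fun x => renyiDiv a (κ x) ν) μ with hL
  rcases eq_or_ne L ⊤ with hLtop | hLtop
  · rw [hLtop]; exact le_top
  have h_ae : ∀ᵐ x ∂μ, renyiDiv a (κ x) ν ≤ L := ae_le_essSup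
  have h_ac : ∀ᵐ x ∂μ, κ x ≪ ν := by
    filter_upwards [h_ae] with x hx
    by_contra hcon
    rw [renyiDiv, if_neg hcon] at hx
    exact hLtop (top_le_iff.mp hx)
  have h_ac' : μ ⊗ₘ κ ≪ μ.prod ν := by
    have := Measure.AbsolutelyContinuous.compProd_right
      (μ := μ) (κ := κ) (η := Kernel.const 𝓧 ν) h_ac
    rwa [Measure.compProd_const] at this
  -- coercion manipulation lemma
  have hcE0 : (0 : EReal) < ((a - 1 : ℝ) : EReal) := by exact_mod_cast hc
  have hcEtop : ((a - 1 : ℝ) : EReal) ≠ ⊤ := EReal.coe_ne_top _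
  have hdiv : ∀ x : EReal, (((a - 1)⁻¹ : ℝ) : EReal) * x = x / ((a - 1 : ℝ) : EReal) := by
    intro x
    rw [EReal.coe_inv, mul_comm]
    rfl
  set M : ℝ≥0∞ := EReal.exp (((a - 1 : ℝ) : EReal) * L) with hM
  have hlogM : ENNReal.log M = ((a - 1 : ℝ) : EReal) * L := EReal.log_exp _
  have hbound : ∀ᵐ x ∂μ, ∫⁻ y, ((κ x).rnDeriv ν y) ^ a ∂ν ≤ M := by
    filter_upwards [h_ae, h_ac] with x hx hxac
    rw [renyiDiv, if_pos hxac, hdiv] at hx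
    rw [← ENNReal.log_le_log_iff, hlogM]
    exact (EReal.div_le_iff_le_mul hcE0 hcEtop).mp hx
  have hmain := key_lintegral_le μ κ ν ha M h_ac h_ac' hbound
  rw [renyiDiv, if_pos h_ac', hdiv]
  rw [EReal.div_le_iff_le_mul hcE0 hcEtop, ← hlogM]
  exact ENNReal.log_le_log_iff.mpr hmain
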